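/- arXiv:2002.07370 — 4 statements merged into one kernel-verified Lean document; each statement's English description precedes it below -/
import Mathlib

section
/- (Cone decomposition for group lasso) Suppose b̂ minimizes L(b) + λ‖b‖_{1,2} where L is convex, and let b* have group support S (i.e., (b*_j, b*_{j+p}) = 0 for j ∉ S). If the subgradient bound sup{⟨g, δ⟩ : g ∈ ∂L(b*)} ≤ (λ/2)‖δ‖_{1,2} holds for all δ, then the error δ = b̂ - b* satisfies ‖δ_{S^c}‖_{1,2} ≤ 3‖δ_S‖_{1,2}. -/
open Finset

/-- The group `ℓ_{1,2}` norm on `ℝ^{2p}`, pairing coordinates `j` and `j+p`. -/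
noncomputable def groupNorm12 (p : ℕ) (b : Fin (2 * p) → ℝ) : ℝ :=
  ∑ j : Fin p, Real.sqrt ((b ⟨j.1, by have := j.2; omega⟩) ^ 2
    + (b ⟨j.1 + p, by have := j.2; omega⟩) ^ 2)

/-- Restriction of `b ∈ ℝ^{2p}` to the coordinate pairs indexed by `S`. -/
noncomputable def groupRestrict (p : ℕ) (hp : 0 < p) (S : Finset (Fin p))
    (b : Fin (2 * p) → ℝ) : Fin (2 * p) → ℝ :=
  fun i => if (⟨i.1 % p, Nat.mod_lt _ hp⟩ : Fin p) ∈ S then b i else 0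

/-- The subdifferential of `L` at `bstar`. -/
def subGrad (p : ℕ) (L : (Fin (2 * p) → ℝ) → ℝ) (bstar : Fin (2 * p) → ℝ) :
    Set (Fin (2 * p) → ℝ) :=
  {g | ∀ x, L bstar + ∑ i, g i * (x i - bstar i) ≤ L x}


open Pointwise

section aux
variable {E : Type*} [AddCommGroup E] [Module ℝ E]

lemma exists_subgrad {L : E → ℝ} (hL : ConvexOn ℝ Set.univ L) (b : E) :
    ∃ g : E →ₗ[ℝ] ℝ, ∀ v, g v ≤ L (b + v) - L b := by
  classical
  set Q : E → ℝ → ℝ := fun v t => (L (b + t • v) - L b) / t with hQ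
  have mono : ∀ v : E, ∀ s t : ℝ, 0 < s → s ≤ t → Q v s ≤ Q v t := by
    intro v s t hs hst
    have ht : 0 < t := lt_of_lt_of_le hs hst
    set u : ℝ := s / t with hu
    have hu0 : 0 ≤ u := by positivity
    have hu1 : u ≤ 1 := by rw [hu, div_le_one ht]; exact hst
    have hpt : (1 - u) • b + u • (b + t • v) = b + (u * t) • v := by module
    have hcomb := hL.2 (Set.mem_univ b) (Set.mem_univ (b + t • v))
      (sub_nonneg.2 hu1) hu0 (by ring)
    rw [hpt] at hcomb
    simp only [smul_eq_mul] at hcomb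
    have hut : u * t = s := by rw [hu]; field_simp
    rw [hut] at hcomb
    have hQs : Q v s = (L (b + s • v) - L b) / s := rfl
    have hQt : Q v t = (L (b + t • v) - L b) / t := rfl
    rw [hQs, hQt, div_le_div_iff₀ hs ht]
    have hexp : (1 - u) * L b + u * L (b + t • v)
        = L b + (s / t) * (L (b + t • v) - L b) := by rw [hu]; ring
    rw [hexp] at hcomb
    have := mul_le_mul_of_nonneg_left hcomb ht.le
    have htne : t ≠ 0 := ht.ne'
    calc (L (b + s • v) - L b) * t = t * L (b + s • v) - t * L b := by ring
    _ ≤ t * (L b + s / t * (L (b + t • v) - L b)) - t * L b := by linarith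
    _ = (L (b + t • v) - L b) * s := by field_simp; ring
  have lower : ∀ v : E, ∀ t : ℝ, 0 < t → L b - L (b - v) ≤ Q v t := by
    intro v t ht
    have ht1 : (0:ℝ) < t + 1 := by linarith
    set w : ℝ := 1 / (t + 1) with hw
    have hw0 : 0 ≤ w := by positivity
    have hwt : t * w + w = 1 := by rw [hw]; field_simp
    have hpt : (t * w) • (b - v) + w • (b + t • v)
        = (t * w + w) • b + (w * t - t * w) • v := by module
    have hpt2 : (t * w) • (b - v) + w • (b + t • v) = b := by
      rw [hpt, hwt, one_smul, show w * t - t * w = 0 by ring, zero_smul, add_zero]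
    have hcomb := hL.2 (Set.mem_univ (b - v)) (Set.mem_univ (b + t • v))
      (mul_nonneg ht.le hw0) hw0 hwt
    rw [hpt2] at hcomb
    simp only [smul_eq_mul] at hcomb
    have hQt : Q v t = (L (b + t • v) - L b) / t := rfl
    rw [hQt, le_div_iff₀ ht]
    have hne : t + 1 ≠ 0 := ht1.ne'
    have h1 : (t + 1) * (t * w * L (b - v) + w * L (b + t • v))
        = t * L (b - v) + L (b + t • v) := by rw [hw]; field_simp
    have key : (t + 1) * L b ≤ t * L (b - v) + L (b + t • v) := by
      calc (t + 1) * L b ≤ (t + 1) * (t * w * L (b - v) + w * L (b + t • v)) :=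
            mul_le_mul_of_nonneg_left hcomb ht1.le
      _ = t * L (b - v) + L (b + t • v) := h1
    nlinarith [key]
  set Qs : E → Set ℝ := fun v => {q | ∃ t : ℝ, 0 < t ∧ q = Q v t} with hQs
  have hne : ∀ v, (Qs v).Nonempty := fun v => ⟨Q v 1, 1, one_pos, rfl⟩
  have hbdd : ∀ v, BddBelow (Qs v) := by
    intro v
    refine ⟨L b - L (b - v), ?_⟩
    rintro q ⟨t, ht, rfl⟩
    exact lower v t ht
  set N : E → ℝ := fun v => sInf (Qs v) with hN
  have N_le : ∀ v, N v ≤ L (b + v) - L b := by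
    intro v
    have : Q v 1 = L (b + v) - L b := by simp [hQ]
    exact this ▸ csInf_le (hbdd v) ⟨1, one_pos, rfl⟩
  have N_hom : ∀ c : ℝ, 0 < c → ∀ v, N (c • v) = c * N v := by
    intro c hc v
    have himg : Qs (c • v) = c • Qs v := by
      ext q
      constructor
      · rintro ⟨t, ht, rfl⟩
        refine ⟨Q v (t * c), ⟨t * c, mul_pos ht hc, rfl⟩, ?_⟩
        show c * Q v (t * c) = Q (c • v) t
        have : t • (c • v) = (t * c) • v := by rw [smul_smul]
        simp only [hQ, this]
        have h1 : t ≠ 0 := ht.ne'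
        have h2 : c ≠ 0 := hc.ne'
        field_simp
      · rintro ⟨q', ⟨t, ht, rfl⟩, rfl⟩
        refine ⟨t / c, div_pos ht hc, ?_⟩
        show c * Q v t = Q (c • v) (t / c)
        have : (t / c) • (c • v) = t • v := by
          rw [smul_smul, div_mul_cancel₀ _ hc.ne']
        simp only [hQ, this]
        have h1 : t ≠ 0 := ht.ne'
        have h2 : c ≠ 0 := hc.ne'
        field_simp
    rw [hN]
    simp only
    rw [himg, Real.sInf_smul_of_nonneg hc.le, smul_eq_mul]
  have N_add : ∀ x y : E, N (x + y) ≤ N x + N y := by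
    intro x y
    have key : ∀ a ∈ Qs x, ∀ b' ∈ Qs y, N (x + y) ≤ a + b' := by
      rintro a ⟨ta, hta, rfl⟩ b' ⟨tb, htb, rfl⟩
      set r : ℝ := min ta tb with hr
      have hrpos : 0 < r := lt_min hta htb
      have hmid : Q (x + y) (r / 2) ≤ Q x r + Q y r := by
        have hpt : (1/2 : ℝ) • (b + r • x) + (1/2 : ℝ) • (b + r • y)
            = b + (r / 2) • (x + y) := by module
        have hcomb := hL.2 (Set.mem_univ (b + r • x)) (Set.mem_univ (b + r • y))
          (by norm_num : (0:ℝ) ≤ 1/2) (by norm_num : (0:ℝ) ≤ 1/2) (by norm_num)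
        rw [hpt] at hcomb
        show (L (b + (r/2) • (x + y)) - L b) / (r/2)
          ≤ (L (b + r • x) - L b) / r + (L (b + r • y) - L b) / r
        simp only [smul_eq_mul] at hcomb
        rw [← add_div, div_le_div_iff₀ (by positivity) hrpos]
        nlinarith [mul_le_mul_of_nonneg_left hcomb hrpos.le]
      have h1 : N (x + y) ≤ Q (x + y) (r / 2) :=
        csInf_le (hbdd _) ⟨r / 2, by positivity, rfl⟩
      have h2 : Q x r ≤ Q x ta := mono x r ta hrpos (min_le_left _ _)
      have h3 : Q y r ≤ Q y tb := mono y r tb hrpos (min_le_right _ _)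
      linarith
    have h1 : ∀ a ∈ Qs x, N (x + y) - a ≤ N y := by
      intro a ha
      refine le_csInf (hne y) fun b' hb' => ?_
      linarith [key a ha b' hb']
    have h2 : N (x + y) - N y ≤ N x := by
      refine le_csInf (hne x) fun a ha => ?_
      linarith [h1 a ha]
    linarith
  have N_zero : 0 ≤ N 0 := by
    refine le_csInf (hne 0) ?_
    rintro q ⟨t, ht, rfl⟩
    simp [hQ]
  obtain ⟨g, -, hg⟩ := exists_extension_of_le_sublinear ⟨⊥, 0⟩ N N_hom N_add
    (fun x => by
      have hx : (x : E) = 0 := (Submodule.mem_bot ℝ).1 x.2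
      simpa [hx] using N_zero)
  exact ⟨g, fun v => (hg v).trans (N_le v)⟩

end aux

lemma sqrt_pair_triangle (a b c d : ℝ) :
    Real.sqrt ((a + c) ^ 2 + (b + d) ^ 2)
      ≤ Real.sqrt (a ^ 2 + b ^ 2) + Real.sqrt (c ^ 2 + d ^ 2) := by
  set x := Real.sqrt (a ^ 2 + b ^ 2) with hx
  set y := Real.sqrt (c ^ 2 + d ^ 2) with hy
  have hx0 : 0 ≤ x := Real.sqrt_nonneg _
  have hy0 : 0 ≤ y := Real.sqrt_nonneg _
  have hx2 : x ^ 2 = a ^ 2 + b ^ 2 := Real.sq_sqrt (by positivity)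
  have hy2 : y ^ 2 = c ^ 2 + d ^ 2 := Real.sq_sqrt (by positivity)
  have hcs : a * c + b * d ≤ x * y := by
    have h1 : a * c + b * d ≤ |a * c + b * d| := le_abs_self _
    have h2 : |a * c + b * d| = Real.sqrt ((a * c + b * d) ^ 2) :=
      (Real.sqrt_sq_eq_abs _).symm
    have h3 : Real.sqrt ((a * c + b * d) ^ 2)
        ≤ Real.sqrt ((a ^ 2 + b ^ 2) * (c ^ 2 + d ^ 2)) := by
      apply Real.sqrt_le_sqrt
      nlinarith [sq_nonneg (a * d - b * c)]
    have h4 : Real.sqrt ((a ^ 2 + b ^ 2) * (c ^ 2 + d ^ 2)) = x * y := by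
      rw [hx, hy, Real.sqrt_mul (by positivity)]
    linarith
  have key : (a + c) ^ 2 + (b + d) ^ 2 ≤ (x + y) ^ 2 := by nlinarith
  calc Real.sqrt ((a + c) ^ 2 + (b + d) ^ 2) ≤ Real.sqrt ((x + y) ^ 2) :=
        Real.sqrt_le_sqrt key
  _ = x + y := Real.sqrt_sq (by positivity)


/-- Cone decomposition for the group lasso: if `b̂` minimizes
`L(b) + λ ‖b‖_{1,2}`, `b*` has group support `S`, and every subgradient `g`
of `L` at `b*` satisfies `⟨g, δ⟩ ≤ (λ/2) ‖δ‖_{1,2}` for all `δ`, then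
`‖(b̂ - b*)_{Sᶜ}‖_{1,2} ≤ 3 ‖(b̂ - b*)_S‖_{1,2}`. -/
theorem group_lasso_cone_decomposition (p : ℕ) (hp : 0 < p)
    (L : (Fin (2 * p) → ℝ) → ℝ) (hL : ConvexOn ℝ Set.univ L)
    (lam : ℝ) (hlam : 0 < lam)
    (bhat bstar : Fin (2 * p) → ℝ)
    (hmin : ∀ b, L bhat + lam * groupNorm12 p bhat ≤ L b + lam * groupNorm12 p b)
    (S : Finset (Fin p))
    (hsupp : ∀ j : Fin p, j ∉ S →
      bstar ⟨j.1, by have := j.2; omega⟩ = 0 ∧ bstar ⟨j.1 + p, by have := j.2; omega⟩ = 0)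
    (hscore : ∀ δ : Fin (2 * p) → ℝ, ∀ g ∈ subGrad p L bstar,
      (∑ i, g i * δ i) ≤ (lam / 2) * groupNorm12 p δ) :
    groupNorm12 p (groupRestrict p hp Sᶜ (bhat - bstar))
      ≤ 3 * groupNorm12 p (groupRestrict p hp S (bhat - bstar)) := by
  classical
  set δ : Fin (2 * p) → ℝ := bhat - bstar with hδ
  set T : (Fin (2 * p) → ℝ) → Fin p → ℝ := fun v j =>
    Real.sqrt ((v ⟨j.1, by have := j.2; omega⟩) ^ 2
      + (v ⟨j.1 + p, by have := j.2; omega⟩) ^ 2) with hT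
  have hgn : ∀ v, groupNorm12 p v = ∑ j, T v j := fun v => rfl
  -- subgradient
  obtain ⟨g, hg⟩ := exists_subgrad hL bstar
  set gv : Fin (2 * p) → ℝ := fun i => g (fun j' => if i = j' then (1 : ℝ) else 0) with hgv
  have hsum : ∀ x : Fin (2 * p) → ℝ, ∑ i, gv i * x i = g x := by
    intro x
    rw [LinearMap.pi_apply_eq_sum_univ g x]
    exact Finset.sum_congr rfl fun i _ => by rw [smul_eq_mul, mul_comm]
  have hsub : gv ∈ subGrad p L bstar := by
    intro x
    have h1 : ∑ i, gv i * (x i - bstar i) = g (x - bstar) := by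
      rw [← hsum (x - bstar)]
      exact Finset.sum_congr rfl fun i _ => by rw [Pi.sub_apply]
    have h2 := hg (x - bstar)
    have h3 : bstar + (x - bstar) = x := by abel
    rw [h3] at h2
    rw [h1]; linarith
  -- score bound applied to -δ
  have hneg : groupNorm12 p (bstar - bhat) = groupNorm12 p δ := by
    rw [hgn, hgn]
    refine Finset.sum_congr rfl fun j _ => ?_
    simp only [hT, hδ, Pi.sub_apply]
    congr 1; ring
  have hsc := hscore (bstar - bhat) gv hsub
  rw [hneg] at hsc
  have hflip : ∑ i, gv i * (bhat i - bstar i) + ∑ i, gv i * ((bstar - bhat) i) = 0 := by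
    rw [← Finset.sum_add_distrib]
    refine Finset.sum_eq_zero fun i _ => by rw [Pi.sub_apply]; ring
  have hsub_at := hsub bhat
  have hminb := hmin bstar
  have key : lam * groupNorm12 p bhat
      ≤ lam * groupNorm12 p bstar + lam / 2 * groupNorm12 p δ := by linarith
  -- restriction computation
  have hres : ∀ (S' : Finset (Fin p)) (v : Fin (2 * p) → ℝ) (j : Fin p),
      T (groupRestrict p hp S' v) j = if j ∈ S' then T v j else 0 := by
    intro S' v j
    have e1 : j.1 % p = j.1 := Nat.mod_eq_of_lt j.2
    have e2 : (j.1 + p) % p = j.1 := by rw [Nat.add_mod_right]; exact Nat.mod_eq_of_lt j.2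
    have hj : (⟨j.1 % p, Nat.mod_lt _ hp⟩ : Fin p) = j := Fin.ext e1
    have hj' : (⟨(j.1 + p) % p, Nat.mod_lt _ hp⟩ : Fin p) = j := Fin.ext e2
    simp only [hT, groupRestrict, hj, hj']
    by_cases h : j ∈ S' <;> simp [h]
  have hA : groupNorm12 p (groupRestrict p hp S δ) = ∑ j ∈ S, T δ j := by
    rw [hgn, Finset.sum_congr rfl fun j _ => hres S δ j, Finset.sum_ite_mem,
      Finset.univ_inter]
  have hB : groupNorm12 p (groupRestrict p hp Sᶜ δ) = ∑ j ∈ Sᶜ, T δ j := by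
    rw [hgn, Finset.sum_congr rfl fun j _ => hres Sᶜ δ j, Finset.sum_ite_mem,
      Finset.univ_inter]
  have hbs : groupNorm12 p bstar = ∑ j ∈ S, T bstar j := by
    rw [hgn]
    refine (Finset.sum_subset (Finset.subset_univ S) fun j _ hj => ?_).symm
    obtain ⟨h1, h2⟩ := hsupp j hj
    simp only [hT, h1, h2]
    simp
  have hlow : ∑ j ∈ S, (T bstar j - T δ j) + ∑ j ∈ Sᶜ, T δ j ≤ groupNorm12 p bhat := by
    rw [hgn, ← Finset.sum_add_sum_compl S (T bhat)]
    refine add_le_add (Finset.sum_le_sum fun j hj => ?_) (Finset.sum_le_sum fun j hj => ?_)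
    · have htri := sqrt_pair_triangle (bhat ⟨j.1, by have := j.2; omega⟩)
        (bhat ⟨j.1 + p, by have := j.2; omega⟩)
        (-(δ ⟨j.1, by have := j.2; omega⟩)) (-(δ ⟨j.1 + p, by have := j.2; omega⟩))
      have e1 : bhat ⟨j.1, by have := j.2; omega⟩ + -(δ ⟨j.1, by have := j.2; omega⟩)
          = bstar ⟨j.1, by have := j.2; omega⟩ := by simp [hδ, Pi.sub_apply]
      have e2 : bhat ⟨j.1 + p, by have := j.2; omega⟩ + -(δ ⟨j.1 + p, by have := j.2; omega⟩)
          = bstar ⟨j.1 + p, by have := j.2; omega⟩ := by simp [hδ, Pi.sub_apply]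
      rw [e1, e2] at htri
      simp only [neg_sq] at htri
      simp only [hT]
      linarith
    · have h12 := hsupp j (Finset.mem_compl.1 hj)
      have : T δ j = T bhat j := by
        simp only [hT, hδ, Pi.sub_apply, h12.1, h12.2, sub_zero]
      exact this.le
  have hsplit : groupNorm12 p δ = ∑ j ∈ S, T δ j + ∑ j ∈ Sᶜ, T δ j := by
    rw [hgn, Finset.sum_add_sum_compl]
  set A := ∑ j ∈ S, T δ j with hAdef
  set B := ∑ j ∈ Sᶜ, T δ j with hBdef
  rw [hA, hB]
  rw [hsplit, hbs] at key
  rw [Finset.sum_sub_distrib] at hlow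
  have hcomb : lam * (∑ j ∈ S, T bstar j - A + B)
      ≤ lam * (∑ j ∈ S, T bstar j) + lam / 2 * (A + B) := by
    calc lam * (∑ j ∈ S, T bstar j - A + B) ≤ lam * groupNorm12 p bhat := by
          have := hlow; nlinarith
    _ ≤ _ := key
  nlinarith [hcomb, hlam]
end

section
/- (Trace inequality for approximately sparse matrices) For any symmetric matrix M ∈ ℝ^{p×p}, any matrix u ∈ ℝ^{k×p}, and any s ∈ ℕ with s ≥ 1, trace(u M uᵀ) ≤ (‖u‖_F + ‖u‖_{1,F}/√s)² · ‖M‖_{S_s}, where ‖M‖_{S_s} = max{trace(a M bᵀ) : a, b ∈ ℝ^{k×p}, ‖a‖_F = ‖b‖_F = 1, a and b have at most s nonzero columns}, and ‖u‖_{1,F} is the sum of the Euclidean norms of the columns of u. -/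
open Finset Matrix

/-- Frobenius norm of a `k × p` real matrix. -/
noncomputable def frobNorm (k p : ℕ) (u : Matrix (Fin k) (Fin p) ℝ) : ℝ :=
  Real.sqrt (∑ i, ∑ j, (u i j) ^ 2)

/-- `‖u‖_{1,F}`: the sum of the Euclidean norms of the columns of `u`. -/
noncomputable def colSumNorm (k p : ℕ) (u : Matrix (Fin k) (Fin p) ℝ) : ℝ :=
  ∑ j, Real.sqrt (∑ i, (u i j) ^ 2)

/-- Number of nonzero columns of `u`. -/
noncomputable def colSupportCard (k p : ℕ) (u : Matrix (Fin k) (Fin p) ℝ) : ℕ :=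
  (univ.filter (fun j => ∃ i, u i j ≠ 0)).card

/-- The `s`-sparse spectral-type norm
`‖M‖_{S_s} = sup {trace (a M bᵀ) : ‖a‖_F = ‖b‖_F = 1, a, b have ≤ s nonzero columns}`. -/
noncomputable def sparseOpNorm (k p s : ℕ) (M : Matrix (Fin p) (Fin p) ℝ) : ℝ :=
  sSup {t : ℝ | ∃ a b : Matrix (Fin k) (Fin p) ℝ,
    frobNorm k p a = 1 ∧ frobNorm k p b = 1 ∧
    colSupportCard k p a ≤ s ∧ colSupportCard k p b ≤ s ∧
    t = Matrix.trace (a * M * bᵀ)}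

lemma cs_abs {k : ℕ} (f g : Fin k → ℝ) :
    |∑ i, f i * g i| ≤ Real.sqrt (∑ i, f i ^ 2) * Real.sqrt (∑ i, g i ^ 2) := by
  have h := Finset.sum_mul_sq_le_sq_mul_sq univ f g
  calc |∑ i, f i * g i| = Real.sqrt ((∑ i, f i * g i) ^ 2) := (Real.sqrt_sq_eq_abs _).symm
    _ ≤ Real.sqrt ((∑ i, f i ^ 2) * ∑ i, g i ^ 2) := Real.sqrt_le_sqrt h
    _ = _ := Real.sqrt_mul (by positivity) _

lemma trace_eq {k p : ℕ} (M : Matrix (Fin p) (Fin p) ℝ) (a b : Matrix (Fin k) (Fin p) ℝ) :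
    Matrix.trace (a * M * bᵀ) = ∑ j, ∑ j', M j j' * ∑ i, a i j * b i j' := by
  have L : Matrix.trace (a * M * bᵀ) = ∑ i, ∑ j', ∑ j, a i j * M j j' * b i j' := by
    simp only [Matrix.trace, Matrix.diag, Matrix.mul_apply, Matrix.transpose_apply,
      Finset.sum_mul]
  have R : (∑ j, ∑ j', M j j' * ∑ i, a i j * b i j')
      = ∑ j, ∑ j', ∑ i, a i j * M j j' * b i j' := by
    refine Finset.sum_congr rfl fun j _ => Finset.sum_congr rfl fun j' _ => ?_
    rw [Finset.mul_sum]
    exact Finset.sum_congr rfl fun i _ => by ring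
  rw [L, R]
  conv_rhs => rw [Finset.sum_comm]
  conv_rhs => enter [2, j']; rw [Finset.sum_comm]
  conv_rhs => rw [Finset.sum_comm]

lemma col_le_frob {k p : ℕ} (a : Matrix (Fin k) (Fin p) ℝ) (j : Fin p) :
    Real.sqrt (∑ i, a i j ^ 2) ≤ frobNorm k p a := by
  apply Real.sqrt_le_sqrt
  apply Finset.sum_le_sum
  intro i _
  exact Finset.single_le_sum (f := fun j' => a i j' ^ 2) (fun j' _ => by positivity)
    (Finset.mem_univ j)

lemma frobNorm_nonneg (k p : ℕ) (u : Matrix (Fin k) (Fin p) ℝ) : 0 ≤ frobNorm k p u :=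
  Real.sqrt_nonneg _

lemma frob_smul (k p : ℕ) (c : ℝ) (a : Matrix (Fin k) (Fin p) ℝ) :
    frobNorm k p (c • a) = |c| * frobNorm k p a := by
  unfold frobNorm
  have : ∀ i j, ((c • a) i j) ^ 2 = c ^ 2 * (a i j) ^ 2 := by
    intro i j; simp [Matrix.smul_apply, smul_eq_mul]; ring
  simp only [this, ← Finset.mul_sum]
  rw [Real.sqrt_mul (sq_nonneg c), Real.sqrt_sq_eq_abs]

lemma frob_zero_iff {k p : ℕ} (a : Matrix (Fin k) (Fin p) ℝ) (h : frobNorm k p a = 0) :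
    a = 0 := by
  unfold frobNorm at h
  have h0 : (∑ i, ∑ j, (a i j) ^ 2) = 0 := by
    have h1 := Real.sqrt_eq_zero'.mp h
    have h2 : (0:ℝ) ≤ ∑ i, ∑ j, (a i j) ^ 2 := by positivity
    linarith
  ext i j
  have hi := (Finset.sum_eq_zero_iff_of_nonneg (fun i _ => by positivity)).mp h0 i (mem_univ i)
  have hj := (Finset.sum_eq_zero_iff_of_nonneg (fun j _ => by positivity)).mp hi j (mem_univ j)
  have := sq_eq_zero_iff.mp hj
  simpa using this

lemma bddAbove_sparse (k p s : ℕ) (M : Matrix (Fin p) (Fin p) ℝ) :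
    BddAbove {t : ℝ | ∃ a b : Matrix (Fin k) (Fin p) ℝ,
      frobNorm k p a = 1 ∧ frobNorm k p b = 1 ∧
      colSupportCard k p a ≤ s ∧ colSupportCard k p b ≤ s ∧
      t = Matrix.trace (a * M * bᵀ)} := by
  refine ⟨∑ j, ∑ j', |M j j'|, ?_⟩
  rintro t ⟨a, b, ha1, hb1, _, _, rfl⟩
  rw [trace_eq]
  refine Finset.sum_le_sum fun j _ => Finset.sum_le_sum fun j' _ => ?_
  have hip : |∑ i, a i j * b i j'| ≤ 1 := by
    refine le_trans (cs_abs _ _) ?_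
    calc Real.sqrt (∑ i, a i j ^ 2) * Real.sqrt (∑ i, b i j' ^ 2)
        ≤ frobNorm k p a * frobNorm k p b :=
          mul_le_mul (col_le_frob a j) (col_le_frob b j') (Real.sqrt_nonneg _)
            (frobNorm_nonneg _ _ _)
      _ = 1 := by rw [ha1, hb1, one_mul]
  calc M j j' * ∑ i, a i j * b i j' ≤ |M j j' * ∑ i, a i j * b i j'| := le_abs_self _
    _ = |M j j'| * |∑ i, a i j * b i j'| := abs_mul _ _
    _ ≤ |M j j'| * 1 := mul_le_mul_of_nonneg_left hip (abs_nonneg _)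
    _ = |M j j'| := mul_one _

lemma pair_bound (k p s : ℕ) (M : Matrix (Fin p) (Fin p) ℝ)
    (a b : Matrix (Fin k) (Fin p) ℝ)
    (ha : colSupportCard k p a ≤ s) (hb : colSupportCard k p b ≤ s) :
    Matrix.trace (a * M * bᵀ)
      ≤ frobNorm k p a * frobNorm k p b * sparseOpNorm k p s M := by
  by_cases hA : frobNorm k p a = 0
  · rw [frob_zero_iff a hA]
    simp [frobNorm]
  by_cases hB : frobNorm k p b = 0
  · rw [frob_zero_iff b hB]
    simp [frobNorm]
  have hA' : 0 < frobNorm k p a := lt_of_le_of_ne (frobNorm_nonneg _ _ _) (Ne.symm hA)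
  have hB' : 0 < frobNorm k p b := lt_of_le_of_ne (frobNorm_nonneg _ _ _) (Ne.symm hB)
  set A := frobNorm k p a
  set B := frobNorm k p b
  have hmem : (A⁻¹ * B⁻¹) * Matrix.trace (a * M * bᵀ) ∈ {t : ℝ | ∃ a b : Matrix (Fin k) (Fin p) ℝ,
      frobNorm k p a = 1 ∧ frobNorm k p b = 1 ∧
      colSupportCard k p a ≤ s ∧ colSupportCard k p b ≤ s ∧
      t = Matrix.trace (a * M * bᵀ)} := by
    refine ⟨A⁻¹ • a, B⁻¹ • b, ?_, ?_, ?_, ?_, ?_⟩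
    · rw [frob_smul, abs_of_pos (by positivity), inv_mul_cancel₀ hA]
    · rw [frob_smul, abs_of_pos (by positivity), inv_mul_cancel₀ hB]
    · refine le_trans (Finset.card_le_card ?_) ha
      intro j hj
      simp only [Finset.mem_filter, Finset.mem_univ, true_and] at hj ⊢
      obtain ⟨i, hi⟩ := hj
      exact ⟨i, fun h => hi (by simp [Matrix.smul_apply, h])⟩
    · refine le_trans (Finset.card_le_card ?_) hb
      intro j hj
      simp only [Finset.mem_filter, Finset.mem_univ, true_and] at hj ⊢
      obtain ⟨i, hi⟩ := hj
      exact ⟨i, fun h => hi (by simp [Matrix.smul_apply, h])⟩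
    · rw [Matrix.transpose_smul, Matrix.smul_mul, Matrix.smul_mul, Matrix.mul_smul,
        Matrix.trace_smul, Matrix.trace_smul]
      simp [smul_eq_mul]; ring
  have hle := le_csSup (bddAbove_sparse k p s M) hmem
  have heq : Matrix.trace (a * M * bᵀ)
      = A * B * ((A⁻¹ * B⁻¹) * Matrix.trace (a * M * bᵀ)) := by
    field_simp
  rw [heq]
  exact mul_le_mul_of_nonneg_left hle (by positivity)

lemma sparseOpNorm_nonneg (k p s : ℕ) (hk : 0 < k) (hp : 0 < p) (hs : 1 ≤ s)
    (M : Matrix (Fin p) (Fin p) ℝ) : 0 ≤ sparseOpNorm k p s M := by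
  set i0 : Fin k := ⟨0, hk⟩
  set j0 : Fin p := ⟨0, hp⟩
  set e : Matrix (Fin k) (Fin p) ℝ :=
    Matrix.of (fun i j => if i = i0 then (if j = j0 then (1:ℝ) else 0) else 0) with he
  have hfe : frobNorm k p e = 1 := by
    have : ∀ i j, (e i j) ^ 2 = if i = i0 then (if j = j0 then (1:ℝ) else 0) else 0 := by
      intro i j
      simp only [he, Matrix.of_apply]
      split_ifs <;> norm_num
    simp [frobNorm, this, Finset.sum_ite_eq']
  have hce : colSupportCard k p e ≤ s := by
    refine le_trans (le_trans (Finset.card_le_card (?_ : _ ⊆ ({j0} : Finset (Fin p)))) (by simp)) hs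
    intro j hj
    simp only [Finset.mem_filter, Finset.mem_univ, true_and] at hj
    obtain ⟨i, hi⟩ := hj
    simp only [he, Matrix.of_apply] at hi
    by_contra hj0
    simp only [Finset.mem_singleton] at hj0
    simp [hj0] at hi
  have hne : frobNorm k p (-e) = 1 := by
    have : (-e) = (-1 : ℝ) • e := by simp
    rw [this, frob_smul]
    simp [hfe]
  have hcne : colSupportCard k p (-e) ≤ s := by
    refine le_trans (le_of_eq ?_) hce
    unfold colSupportCard
    congr 1
    apply Finset.filter_congr
    intro j _
    simp
  have h1 : Matrix.trace (e * M * eᵀ) ≤ sparseOpNorm k p s M :=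
    le_csSup (bddAbove_sparse k p s M) ⟨e, e, hfe, hfe, hce, hce, rfl⟩
  have h2 : -Matrix.trace (e * M * eᵀ) ≤ sparseOpNorm k p s M := by
    refine le_csSup (bddAbove_sparse k p s M) ⟨e, -e, hfe, hne, hce, hcne, ?_⟩
    rw [Matrix.transpose_neg, Matrix.mul_neg, Matrix.trace_neg]
  linarith

lemma block_sum_eq (g : ℕ → ℝ) (s : ℕ) (n : ℕ) :
    ∑ l ∈ Finset.range n, ∑ m ∈ Finset.Ico (l*s) (l*s+s), g m
      = ∑ m ∈ Finset.range (n*s), g m := by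
  induction n with
  | zero => simp
  | succ n ih =>
      rw [Finset.sum_range_succ, ih, Finset.range_eq_Ico, add_one_mul, Finset.range_eq_Ico]
      exact Finset.sum_Ico_consecutive g (Nat.zero_le _) (Nat.le_add_right _ _)

/-- Trace inequality for approximately sparse matrices:
`trace (u M uᵀ) ≤ (‖u‖_F + ‖u‖_{1,F}/√s)² ‖M‖_{S_s}`. -/
theorem trace_sparse_decomposition_bound (k p s : ℕ) (hs : 1 ≤ s)
    (M : Matrix (Fin p) (Fin p) ℝ) (hM : M.IsSymm)
    (u : Matrix (Fin k) (Fin p) ℝ) :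
    Matrix.trace (u * M * uᵀ)
      ≤ (frobNorm k p u + colSumNorm k p u / Real.sqrt s) ^ 2 * sparseOpNorm k p s M := by
  rcases Nat.eq_zero_or_pos k with hk | hk
  · subst hk
    have hC : sparseOpNorm 0 p s M = 0 := by
      unfold sparseOpNorm
      convert Real.sSup_empty using 2
      ext t
      simp only [Set.mem_setOf_eq, Set.mem_empty_iff_false, iff_false]
      rintro ⟨a, b, ha, -, -, -, -⟩
      simp [frobNorm] at ha
    have hT : Matrix.trace (u * M * uᵀ) = 0 := by
      simp [Matrix.trace]
    rw [hT, hC, mul_zero]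
  rcases Nat.eq_zero_or_pos p with hp | hp
  · subst hp
    have hC : sparseOpNorm k 0 s M = 0 := by
      unfold sparseOpNorm
      convert Real.sSup_empty using 2
      ext t
      simp only [Set.mem_setOf_eq, Set.mem_empty_iff_false, iff_false]
      rintro ⟨a, b, ha, -, -, -, -⟩
      simp [frobNorm] at ha
    have hT : Matrix.trace (u * M * uᵀ) = 0 := by
      simp [Matrix.trace, Matrix.diag, Matrix.mul_apply]
    rw [hT, hC, mul_zero]
  -- main case
  have hs0 : (0:ℝ) < (s:ℝ) := by exact_mod_cast Nat.lt_of_lt_of_le Nat.zero_lt_one hs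
  have hss : (0:ℝ) < Real.sqrt s := Real.sqrt_pos.mpr hs0
  set lam : Fin p → ℝ := fun j => Real.sqrt (∑ i, (u i j) ^ 2) with hlam
  have lam_nonneg : ∀ j, 0 ≤ lam j := fun j => Real.sqrt_nonneg _
  have key := Tuple.monotone_sort (fun j => -lam j)
  set σ : Equiv.Perm (Fin p) := Tuple.sort (fun j => -lam j) with hσ
  have hanti : ∀ r r' : Fin p, r ≤ r' → lam (σ r') ≤ lam (σ r) := by
    intro r r' h
    have := key h
    simp only [Function.comp_apply] at this
    linarith
  set blk : Fin p → ℕ := fun j => (σ.symm j : ℕ) / s with hblk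
  set v : ℕ → Matrix (Fin k) (Fin p) ℝ :=
    fun l => Matrix.of (fun i j => if blk j = l then u i j else 0) with hv
  have hrank : ∀ j l, blk j = l → l * s ≤ (σ.symm j : ℕ) ∧ (σ.symm j : ℕ) < l * s + s := by
    intro j l hj
    simp only [hblk] at hj
    have h1 := Nat.div_add_mod ((σ.symm j : Fin p) : ℕ) s
    have h2 := Nat.mod_lt ((σ.symm j : Fin p) : ℕ) (show 0 < s by omega)
    rw [hj] at h1
    have hmc : s * l = l * s := Nat.mul_comm s l
    omega
  have blkcard : ∀ l, (univ.filter fun j : Fin p => blk j = l).card ≤ s := by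
    intro l
    refine le_trans (Finset.card_le_card_of_injOn (fun j : Fin p => (σ.symm j : ℕ))
      (t := Finset.Ico (l*s) (l*s+s)) ?_ ?_) ?_
    · intro j hj
      simp only [Finset.mem_coe, Finset.mem_filter, Finset.mem_univ, true_and] at hj
      have := hrank j l hj
      simp only [Finset.mem_coe, Finset.mem_Ico]
      omega
    · intro j1 _ j2 _ h
      exact σ.symm.injective (Fin.val_injective h)
    · rw [Nat.card_Ico]; omega
  have hsupp : ∀ l, colSupportCard k p (v l) ≤ s := by
    intro l
    refine le_trans (Finset.card_le_card ?_) (blkcard l)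
    intro j hj
    simp only [Finset.mem_filter, Finset.mem_univ, true_and, hv, Matrix.of_apply] at hj ⊢
    obtain ⟨i, hi⟩ := hj
    by_contra h
    simp [h] at hi
  have hdecomp : u = ∑ l ∈ Finset.range p, v l := by
    ext i j
    have hb : blk j < p := lt_of_le_of_lt (Nat.div_le_self _ _) (σ.symm j).isLt
    simp only [Matrix.sum_apply, hv, Matrix.of_apply]
    rw [Finset.sum_ite_eq]
    simp [Finset.mem_range, hb]
  have hsplit : Matrix.trace (u * M * uᵀ)
      = ∑ l ∈ Finset.range p, ∑ m ∈ Finset.range p, Matrix.trace (v l * M * (v m)ᵀ) := by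
    conv_lhs => rw [hdecomp]
    rw [Matrix.sum_mul, Matrix.transpose_sum, Matrix.sum_mul, Matrix.trace_sum]
    refine Finset.sum_congr rfl fun l _ => ?_
    rw [Matrix.mul_sum, Matrix.trace_sum]
  set F : ℕ → ℝ := fun l => frobNorm k p (v l) with hF
  have hFnn : ∀ l, 0 ≤ F l := fun l => frobNorm_nonneg _ _ _
  set C := sparseOpNorm k p s M with hCdef
  have hC : 0 ≤ C := sparseOpNorm_nonneg k p s hk hp hs M
  have hsum : Matrix.trace (u * M * uᵀ) ≤ (∑ l ∈ Finset.range p, F l) ^ 2 * C := by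
    rw [hsplit]
    calc ∑ l ∈ Finset.range p, ∑ m ∈ Finset.range p, Matrix.trace (v l * M * (v m)ᵀ)
        ≤ ∑ l ∈ Finset.range p, ∑ m ∈ Finset.range p, F l * F m * C :=
          Finset.sum_le_sum fun l _ => Finset.sum_le_sum fun m _ =>
            pair_bound k p s M _ _ (hsupp l) (hsupp m)
      _ = (∑ l ∈ Finset.range p, F l) ^ 2 * C := by
          rw [sq, Finset.sum_mul_sum, Finset.sum_mul]
          exact (Finset.sum_congr rfl fun l _ => by rw [Finset.sum_mul]).symm
  -- the g function on ranks
  set g : ℕ → ℝ := fun m => if h : m < p then lam (σ ⟨m, h⟩) else 0 with hg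
  have g_nonneg : ∀ m, 0 ≤ g m := by
    intro m
    simp only [hg]
    split_ifs
    · exact lam_nonneg _
    · exact le_refl _
  have hgtot : ∀ N, ∑ m ∈ Finset.range N, g m ≤ colSumNorm k p u := by
    have hgp : ∑ m ∈ Finset.range p, g m = colSumNorm k p u := by
      rw [← Fin.sum_univ_eq_sum_range g p]
      have e2 : ∀ r : Fin p, g (r : ℕ) = lam (σ r) := by
        intro r
        simp only [hg]
        rw [dif_pos r.isLt]
      rw [Finset.sum_congr rfl fun r _ => e2 r, Equiv.sum_comp σ lam]
      rfl
    intro N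
    rcases le_or_gt N p with h | h
    · calc ∑ m ∈ Finset.range N, g m ≤ ∑ m ∈ Finset.range p, g m :=
          Finset.sum_le_sum_of_subset_of_nonneg (Finset.range_subset_range.mpr h)
            (fun m _ _ => g_nonneg m)
        _ = _ := hgp
    · have hsplit2 : ∑ m ∈ Finset.range N, g m
          = ∑ m ∈ Finset.range p, g m + ∑ m ∈ Finset.Ico p N, g m := by
        rw [Finset.range_eq_Ico, Finset.range_eq_Ico]
        exact (Finset.sum_Ico_consecutive g (Nat.zero_le p) h.le).symm
      have hz : ∑ m ∈ Finset.Ico p N, g m = 0 := by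
        refine Finset.sum_eq_zero fun m hm => ?_
        simp only [Finset.mem_Ico] at hm
        simp only [hg]
        rw [dif_neg (Nat.not_lt.mpr hm.1)]
      rw [hsplit2, hz, hgp, add_zero]
  have hF0 : F 0 ≤ frobNorm k p u := by
    apply Real.sqrt_le_sqrt
    refine Finset.sum_le_sum fun i _ => Finset.sum_le_sum fun j _ => ?_
    simp only [hv, Matrix.of_apply]
    split_ifs
    · exact le_refl _
    · simpa using sq_nonneg (u i j)
  have hFl : ∀ l ∈ Finset.Ico 1 p,
      F l ≤ (∑ m ∈ Finset.Ico ((l-1)*s) ((l-1)*s+s), g m) / Real.sqrt s := by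
    intro l hl
    simp only [Finset.mem_Ico] at hl
    set K := ∑ m ∈ Finset.Ico ((l-1)*s) ((l-1)*s+s), g m with hK
    have hKnn : 0 ≤ K := Finset.sum_nonneg fun m _ => g_nonneg m
    have hIcoEq : (l-1)*s + s = l * s := by
      have h1 : l - 1 + 1 = l := by omega
      calc (l-1)*s + s = (l-1+1)*s := (add_one_mul _ _).symm
        _ = l * s := by rw [h1]
    by_cases hBe : (univ.filter fun j : Fin p => blk j = l) = ∅
    · have hv0 : ∀ i j, v l i j = 0 := by
        intro i j
        simp only [hv, Matrix.of_apply]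
        rw [if_neg]
        intro h
        have hmem : j ∈ univ.filter fun j : Fin p => blk j = l := by
          simp [h]
        rw [hBe] at hmem
        simp at hmem
      have : F l = 0 := by
        simp only [hF]
        unfold frobNorm
        rw [show (∑ i, ∑ j, (v l i j)^2) = 0 from
          Finset.sum_eq_zero fun i _ => Finset.sum_eq_zero fun j _ => by rw [hv0]; ring]
        exact Real.sqrt_zero
      rw [this]
      positivity
    · obtain ⟨j₀, hj₀⟩ := Finset.nonempty_iff_ne_empty.mpr hBe
      simp only [Finset.mem_filter, Finset.mem_univ, true_and] at hj₀
      have hls : l * s < p := lt_of_le_of_lt (hrank j₀ l hj₀).1 (σ.symm j₀).isLt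
      have hcol : ∀ j, blk j = l → lam j ≤ K / s := by
        intro j hj
        have hr := hrank j l hj
        have hterm : ∀ m ∈ Finset.Ico ((l-1)*s) ((l-1)*s+s), lam j ≤ g m := by
          intro m hm
          simp only [Finset.mem_Ico] at hm
          have hmlt : m < p := by omega
          simp only [hg]
          rw [dif_pos hmlt]
          have hj' : lam j = lam (σ (σ.symm j)) := by rw [Equiv.apply_symm_apply]
          rw [hj']
          refine hanti _ _ ?_
          rw [Fin.le_def]
          simp only
          omega
        have hcard : (Finset.Ico ((l-1)*s) ((l-1)*s+s)).card = s := by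
          rw [Nat.card_Ico]; omega
        have hle := Finset.card_nsmul_le_sum (Finset.Ico ((l-1)*s) ((l-1)*s+s))
          g (lam j) hterm
        rw [hcard, nsmul_eq_mul] at hle
        rw [le_div_iff₀ hs0]
        calc lam j * s = (s:ℝ) * lam j := by ring
          _ ≤ K := hle
      have hFl2 : (∑ i, ∑ j, (v l i j)^2) ≤ (s:ℝ) * (K/s)^2 := by
        rw [Finset.sum_comm]
        have hcols : ∀ j : Fin p, (∑ i, (v l i j)^2)
            = if blk j = l then ∑ i, (u i j)^2 else 0 := by
          intro j
          by_cases h : blk j = l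
          · simp [hv, h]
          · simp [hv, h]
        rw [Finset.sum_congr rfl fun j _ => hcols j, ← Finset.sum_filter]
        have hterm2 : ∀ j ∈ univ.filter fun j : Fin p => blk j = l,
            (∑ i, (u i j)^2) ≤ (K/s)^2 := by
          intro j hj
          simp only [Finset.mem_filter, Finset.mem_univ, true_and] at hj
          have h1 : ∑ i, (u i j)^2 = lam j ^ 2 := (Real.sq_sqrt (by positivity)).symm
          rw [h1]
          exact pow_le_pow_left₀ (lam_nonneg j) (hcol j hj) 2
        calc ∑ j ∈ univ.filter (fun j : Fin p => blk j = l), ∑ i, (u i j)^2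
            ≤ (univ.filter fun j : Fin p => blk j = l).card • ((K/s)^2) :=
              Finset.sum_le_card_nsmul _ _ _ hterm2
          _ ≤ (s:ℝ) * (K/s)^2 := by
              rw [nsmul_eq_mul]
              refine mul_le_mul_of_nonneg_right ?_ (by positivity)
              exact_mod_cast blkcard l
      have hsqrt : Real.sqrt ((s:ℝ) * (K/s)^2) = K / Real.sqrt s := by
        rw [Real.sqrt_mul (le_of_lt hs0), Real.sqrt_sq (by positivity)]
        have h2 : Real.sqrt s * Real.sqrt s = (s:ℝ) := Real.mul_self_sqrt (le_of_lt hs0)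
        rw [mul_div_assoc']
        rw [div_eq_div_iff hs0.ne' hss.ne']
        calc Real.sqrt s * K * Real.sqrt s = K * (Real.sqrt s * Real.sqrt s) := by ring
          _ = K * s := by rw [h2]
      calc F l = Real.sqrt (∑ i, ∑ j, (v l i j)^2) := rfl
        _ ≤ Real.sqrt ((s:ℝ) * (K/s)^2) := Real.sqrt_le_sqrt hFl2
        _ = K / Real.sqrt s := hsqrt
  have sumF : ∑ l ∈ Finset.range p, F l
      ≤ frobNorm k p u + colSumNorm k p u / Real.sqrt s := by
    have hrange : Finset.range p = insert 0 (Finset.Ico 1 p) := by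
      ext x
      simp only [Finset.mem_range, Finset.mem_insert, Finset.mem_Ico]
      omega
    rw [hrange, Finset.sum_insert (by simp)]
    refine add_le_add hF0 ?_
    calc ∑ l ∈ Finset.Ico 1 p, F l
        ≤ ∑ l ∈ Finset.Ico 1 p, (∑ m ∈ Finset.Ico ((l-1)*s) ((l-1)*s+s), g m) / Real.sqrt s :=
          Finset.sum_le_sum hFl
      _ = (∑ l ∈ Finset.Ico 1 p, ∑ m ∈ Finset.Ico ((l-1)*s) ((l-1)*s+s), g m) / Real.sqrt s :=
          (Finset.sum_div _ _ _).symm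
      _ ≤ colSumNorm k p u / Real.sqrt s := by
          refine div_le_div_of_nonneg_right ?_ hss.le
          rw [Finset.sum_Ico_eq_sum_range]
          have hre : ∀ i, (1 + i - 1) * s = i * s := by intro i; congr 1; omega
          calc ∑ i ∈ Finset.range (p - 1),
                ∑ m ∈ Finset.Ico ((1 + i - 1)*s) ((1 + i - 1)*s + s), g m
              = ∑ i ∈ Finset.range (p - 1), ∑ m ∈ Finset.Ico (i*s) (i*s + s), g m := by
                refine Finset.sum_congr rfl fun i _ => ?_
                rw [hre i]
            _ = ∑ m ∈ Finset.range ((p-1)*s), g m := block_sum_eq g s (p-1)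
            _ ≤ colSumNorm k p u := hgtot _
  calc Matrix.trace (u * M * uᵀ) ≤ (∑ l ∈ Finset.range p, F l) ^ 2 * C := hsum
    _ ≤ (frobNorm k p u + colSumNorm k p u / Real.sqrt s) ^ 2 * C := by
        refine mul_le_mul_of_nonneg_right ?_ hC
        exact pow_le_pow_left₀ (Finset.sum_nonneg fun l _ => hFnn l) sumF 2
end

section
/- (Thresholding preserves rate and gains sparsity) Let b̂, b* ∈ ℝ^{2p} with group support of b* of size at most s, and let λ > 0. Define b̂^λ by zeroing each group pair (b̂_j, b̂_{j+p}) whose Euclidean norm is at most λ. Then ‖b̂^λ - b*‖_{1,2} ≤ csλ + ‖b̂ - b*‖_{1,2} for a constant c depending only on the support size, and the number of nonzero groups of b̂^λ is at most 2cs + ‖b̂ - b*‖_{1,2}/λ. -/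
open Finset

/-- Group support of `b`: the set of indices `j` whose pair `(b_j, b_{j+p})`
is nonzero. -/
noncomputable def groupSupport (p : ℕ) (b : Fin (2 * p) → ℝ) : Finset (Fin p) :=
  univ.filter (fun j => b ⟨j.1, by have := j.2; omega⟩ ≠ 0 ∨
    b ⟨j.1 + p, by have := j.2; omega⟩ ≠ 0)

/-- Hard group-thresholding at level `lam`: each pair `(b_j, b_{j+p})` with
`b_j² + b_{j+p}² ≤ lam²` is set to zero. -/
noncomputable def groupThreshold (p : ℕ) (hp : 0 < p) (lam : ℝ)
    (b : Fin (2 * p) → ℝ) : Fin (2 * p) → ℝ :=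
  fun i =>
    if (b ⟨i.1 % p, by have := Nat.mod_lt i.1 hp; omega⟩) ^ 2
        + (b ⟨i.1 % p + p, by have := Nat.mod_lt i.1 hp; omega⟩) ^ 2 > lam ^ 2
    then b i else 0

private lemma sqrt2_triangle (x y u v : ℝ) :
    Real.sqrt ((x + u) ^ 2 + (y + v) ^ 2)
      ≤ Real.sqrt (x ^ 2 + y ^ 2) + Real.sqrt (u ^ 2 + v ^ 2) := by
  have h1 : (0:ℝ) ≤ x ^ 2 + y ^ 2 := by positivity
  have h2 : (0:ℝ) ≤ u ^ 2 + v ^ 2 := by positivity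
  have hcs : x * u + y * v ≤ Real.sqrt (x ^ 2 + y ^ 2) * Real.sqrt (u ^ 2 + v ^ 2) := by
    have hsq : (x * u + y * v) ^ 2 ≤ (x ^ 2 + y ^ 2) * (u ^ 2 + v ^ 2) := by
      nlinarith [sq_nonneg (x * v - y * u)]
    nlinarith [Real.sq_sqrt h1, Real.sq_sqrt h2,
      mul_nonneg (Real.sqrt_nonneg (x ^ 2 + y ^ 2)) (Real.sqrt_nonneg (u ^ 2 + v ^ 2))]
  have key : (x + u) ^ 2 + (y + v) ^ 2
      ≤ (Real.sqrt (x ^ 2 + y ^ 2) + Real.sqrt (u ^ 2 + v ^ 2)) ^ 2 := by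
    have e1 := Real.sq_sqrt h1
    have e2 := Real.sq_sqrt h2
    nlinarith [hcs]
  calc Real.sqrt ((x + u) ^ 2 + (y + v) ^ 2)
      ≤ Real.sqrt ((Real.sqrt (x ^ 2 + y ^ 2) + Real.sqrt (u ^ 2 + v ^ 2)) ^ 2) :=
        Real.sqrt_le_sqrt key
    _ = _ := Real.sqrt_sq (by positivity)

private lemma point_aux (x y u v lam : ℝ) (hlam : 0 < lam)
    (hc : ¬ lam ^ 2 < u ^ 2 + v ^ 2) :
    Real.sqrt ((0 - x) ^ 2 + (0 - y) ^ 2)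
      ≤ Real.sqrt ((u - x) ^ 2 + (v - y) ^ 2) + lam := by
  have tri := sqrt2_triangle (x - u) (y - v) u v
  have e1 : x - u + u = x := by ring
  have e2 : y - v + v = y := by ring
  rw [e1, e2] at tri
  have e3 : (x - u) ^ 2 = (u - x) ^ 2 := by ring
  have e4 : (y - v) ^ 2 = (v - y) ^ 2 := by ring
  rw [e3, e4] at tri
  have hle : Real.sqrt (u ^ 2 + v ^ 2) ≤ lam :=
    calc Real.sqrt (u ^ 2 + v ^ 2) ≤ Real.sqrt (lam ^ 2) :=
          Real.sqrt_le_sqrt (not_lt.mp hc)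
      _ = lam := Real.sqrt_sq hlam.le
  have e5 : (0 - x) ^ 2 + (0 - y) ^ 2 = x ^ 2 + y ^ 2 := by ring
  rw [e5]
  linarith

/-- Thresholding preserves the rate and gains sparsity: if `b*` has at most
`c·s` nonzero groups, then `‖b̂^λ - b*‖_{1,2} ≤ c s λ + ‖b̂ - b*‖_{1,2}` and
`b̂^λ` has at most `2 c s + ‖b̂ - b*‖_{1,2}/λ` nonzero groups. -/
theorem group_threshold_rate_and_sparsity (p : ℕ) (hp : 0 < p)
    (bhat bstar : Fin (2 * p) → ℝ) (lam : ℝ) (hlam : 0 < lam)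
    (c s : ℕ) (hsupp : (groupSupport p bstar).card ≤ c * s) :
    groupNorm12 p (groupThreshold p hp lam bhat - bstar)
        ≤ (c * s : ℝ) * lam + groupNorm12 p (bhat - bstar) ∧
    ((groupSupport p (groupThreshold p hp lam bhat)).card : ℝ)
        ≤ 2 * (c * s : ℝ) + groupNorm12 p (bhat - bstar) / lam := by
  classical
  set bt := groupThreshold p hp lam bhat with hbt
  set S := groupSupport p bstar with hS
  set T := groupSupport p bt with hT
  -- evaluation of the threshold on the two halves of a group
  have thrf : ∀ j : Fin p,
      bt ⟨j.1, by have := j.2; omega⟩ =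
        if lam ^ 2 < (bhat ⟨j.1, by have := j.2; omega⟩) ^ 2
            + (bhat ⟨j.1 + p, by have := j.2; omega⟩) ^ 2
        then bhat ⟨j.1, by have := j.2; omega⟩ else 0 := by
    intro j
    simp only [hbt, groupThreshold, gt_iff_lt]
    congr 2 <;> simp [Nat.mod_eq_of_lt j.2]
  have thrg : ∀ j : Fin p,
      bt ⟨j.1 + p, by have := j.2; omega⟩ =
        if lam ^ 2 < (bhat ⟨j.1, by have := j.2; omega⟩) ^ 2
            + (bhat ⟨j.1 + p, by have := j.2; omega⟩) ^ 2
        then bhat ⟨j.1 + p, by have := j.2; omega⟩ else 0 := by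
    intro j
    simp only [hbt, groupThreshold, gt_iff_lt]
    congr 2 <;> simp [Nat.add_mod_right, Nat.mod_eq_of_lt j.2]
  -- notation for the summands
  set B : Fin p → ℝ := fun j =>
    Real.sqrt (((bhat - bstar) ⟨j.1, by have := j.2; omega⟩) ^ 2
      + ((bhat - bstar) ⟨j.1 + p, by have := j.2; omega⟩) ^ 2) with hB
  have hBnn : ∀ j, 0 ≤ B j := fun j => Real.sqrt_nonneg _
  have hnorm : groupNorm12 p (bhat - bstar) = ∑ j : Fin p, B j := rfl
  have hnormnn : 0 ≤ groupNorm12 p (bhat - bstar) := by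
    rw [hnorm]; exact Finset.sum_nonneg fun j _ => hBnn j
  -- membership in S
  have hSmem : ∀ j : Fin p, j ∉ S →
      bstar ⟨j.1, by have := j.2; omega⟩ = 0 ∧
      bstar ⟨j.1 + p, by have := j.2; omega⟩ = 0 := by
    intro j hj
    simp only [hS, groupSupport, mem_filter, mem_univ, true_and] at hj
    push_neg at hj
    exact hj
  constructor
  · -- rate bound
    have point : ∀ j : Fin p,
        Real.sqrt (((bt - bstar) ⟨j.1, by have := j.2; omega⟩) ^ 2
          + ((bt - bstar) ⟨j.1 + p, by have := j.2; omega⟩) ^ 2)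
        ≤ B j + (if j ∈ S then lam else 0) := by
      intro j
      simp only [Pi.sub_apply]
      rw [thrf j, thrg j]
      by_cases hc : lam ^ 2 < (bhat ⟨j.1, by have := j.2; omega⟩) ^ 2
          + (bhat ⟨j.1 + p, by have := j.2; omega⟩) ^ 2
      · simp only [if_pos hc, hB, Pi.sub_apply]
        have hite : (0:ℝ) ≤ if j ∈ S then lam else 0 := by
          split_ifs
          exacts [hlam.le, le_rfl]
        linarith
      · simp only [if_neg hc, hB, Pi.sub_apply]
        by_cases hjS : j ∈ S
        · rw [if_pos hjS]
          exact point_aux _ _ _ _ lam hlam hc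
        · have hx := (hSmem j hjS).1
          have hy := (hSmem j hjS).2
          rw [if_neg hjS, add_zero]
          have hz : (0 - bstar ⟨j.1, by have := j.2; omega⟩) ^ 2
              + (0 - bstar ⟨j.1 + p, by have := j.2; omega⟩) ^ 2 = 0 := by
            rw [hx, hy]; ring
          rw [hz, Real.sqrt_zero]
          positivity
    calc groupNorm12 p (bt - bstar)
        ≤ ∑ j : Fin p, (B j + (if j ∈ S then lam else 0)) := by
          unfold groupNorm12
          exact Finset.sum_le_sum fun j _ => point j
      _ = (∑ j : Fin p, B j) + ∑ j : Fin p, (if j ∈ S then lam else 0) := by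
          rw [Finset.sum_add_distrib]
      _ ≤ (c * s : ℝ) * lam + groupNorm12 p (bhat - bstar) := by
          rw [hnorm]
          have : (∑ j : Fin p, (if j ∈ S then lam else 0)) = S.card * lam := by
            rw [Finset.sum_ite_mem, Finset.univ_inter, Finset.sum_const,
              nsmul_eq_mul]
          rw [this]
          have : (S.card : ℝ) * lam ≤ (c * s : ℝ) * lam := by
            apply mul_le_mul_of_nonneg_right _ hlam.le
            exact_mod_cast hsupp
          linarith
  · -- sparsity bound
    have hTcond : ∀ j ∈ T, lam ^ 2 < (bhat ⟨j.1, by have := j.2; omega⟩) ^ 2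
        + (bhat ⟨j.1 + p, by have := j.2; omega⟩) ^ 2 := by
      intro j hj
      simp only [hT, groupSupport, mem_filter, mem_univ, true_and] at hj
      by_contra hc
      rw [thrf j, if_neg hc] at hj
      rw [thrg j, if_neg hc] at hj
      simp at hj
    have hTout : ∀ j ∈ T \ S, lam < B j := by
      intro j hj
      rw [mem_sdiff] at hj
      have hx := (hSmem j hj.2).1
      have hy := (hSmem j hj.2).2
      have hc := hTcond j hj.1
      rw [hB]
      simp only [Pi.sub_apply, hx, hy, sub_zero]
      rw [show lam = Real.sqrt (lam ^ 2) from (Real.sqrt_sq hlam.le).symm]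
      exact Real.sqrt_lt_sqrt (by positivity) hc
    have hcount : (T \ S).card * lam ≤ groupNorm12 p (bhat - bstar) := by
      calc ((T \ S).card : ℝ) * lam = ∑ _j ∈ T \ S, lam := by
            rw [Finset.sum_const, nsmul_eq_mul]
        _ ≤ ∑ j ∈ T \ S, B j := Finset.sum_le_sum fun j hj => (hTout j hj).le
        _ ≤ ∑ j : Fin p, B j := Finset.sum_le_sum_of_subset_of_nonneg
            (Finset.subset_univ _) (fun j _ _ => hBnn j)
        _ = groupNorm12 p (bhat - bstar) := hnorm.symm
    have hsplit : T.card ≤ (T \ S).card + S.card := Finset.card_le_card_sdiff_add_card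
    have h1 : ((T \ S).card : ℝ) ≤ groupNorm12 p (bhat - bstar) / lam := by
      rw [le_div_iff₀ hlam]
      exact hcount
    have h2 : (S.card : ℝ) ≤ (c * s : ℝ) := by exact_mod_cast hsupp
    have h3 : (T.card : ℝ) ≤ ((T \ S).card : ℝ) + (S.card : ℝ) := by exact_mod_cast hsplit
    have hcs : (0:ℝ) ≤ (c * s : ℝ) := by positivity
    linarith
end

section
/- (Self-normalized bound for nonnegative bounded sums) Let W₁,…,W_n be independent nonnegative random variables with Wᵢ ≤ cᵢ almost surely and E[Wᵢ] ≤ mᵢ. Set S = Σᵢ Wᵢ, a = 2Σᵢ mᵢ, b = (Σᵢ cᵢ²)^{1/2}, and V² = Σᵢ Wᵢ². If P(S ≥ a) ≤ 1/4 and P(V² ≥ b²) ≤ 1/4 (the latter automatic since V² ≤ b²), then for all x > 0, P(S ≥ x(a + b + V)) ≤ 2e^{-x²/2}. -/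
open MeasureTheory ProbabilityTheory

lemma aux_mgf_bound {Ω : Type*} [MeasureSpace Ω] [IsProbabilityMeasure (ℙ : Measure Ω)]
    (X : Ω → ℝ) (hm : Measurable X) (c mm l : ℝ) (hl : 0 ≤ l)
    (h0 : ∀ᵐ ω ∂ℙ, 0 ≤ X ω) (hc : ∀ᵐ ω ∂ℙ, X ω ≤ c)
    (hmean : (∫ ω, X ω) ≤ mm) :
    mgf X ℙ l ≤ Real.exp (l * mm + l ^ 2 * c ^ 2 / 2) := by
  have hintX : Integrable X ℙ := by
    refine Integrable.mono' (integrable_const c) hm.aestronglyMeasurable ?_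
    filter_upwards [h0, hc] with ω h1 h2
    rw [Real.norm_eq_abs, abs_of_nonneg h1]; exact h2
  set μ0 : ℝ := ∫ ω, X ω with hμ0def
  have hμ0 : 0 ≤ μ0 := integral_nonneg_of_ae h0
  have hμc : μ0 ≤ c := by
    calc μ0 ≤ ∫ _ω, c ∂ℙ := integral_mono_ae hintX (integrable_const c) hc
    _ = c := by simp
  have hmm : 0 ≤ mm := hμ0.trans hmean
  rcases le_or_gt c 0 with hc0 | hc0
  · -- X = 0 a.e.
    have hX0 : ∀ᵐ ω ∂ℙ, X ω = 0 := by
      filter_upwards [h0, hc] with ω h1 h2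
      exact le_antisymm (h2.trans hc0) h1
    have : mgf X ℙ l = 1 := by
      rw [mgf]
      rw [integral_congr_ae (g := fun _ => (1:ℝ)) (by filter_upwards [hX0] with ω h; simp [h])]
      simp
    rw [this]
    refine Real.one_le_exp (by positivity)
  · -- main case
    set A : ℝ := Real.exp (l * μ0 - l * c) with hA
    set B : ℝ := Real.exp (l * μ0 + l * c) with hB
    have key : ∀ᵐ ω ∂ℙ, Real.exp (l * X ω) ≤
        ((c + μ0) * A + (c - μ0) * B) / (2 * c) + ((B - A) / (2 * c)) * X ω := by
      filter_upwards [h0, hc] with ω h1 h2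
      have ha' : (0:ℝ) ≤ (c - (X ω - μ0)) / (2 * c) := by
        apply div_nonneg _ (by linarith); linarith
      have hb' : (0:ℝ) ≤ (c + (X ω - μ0)) / (2 * c) := by
        apply div_nonneg _ (by linarith); linarith
      have hab : (c - (X ω - μ0)) / (2 * c) + (c + (X ω - μ0)) / (2 * c) = 1 := by
        field_simp; ring
      have hcv := convexOn_exp.2 (Set.mem_univ (l * μ0 - l * c)) (Set.mem_univ (l * μ0 + l * c))
        ha' hb' hab
      have harg : ((c - (X ω - μ0)) / (2 * c)) • (l * μ0 - l * c)
          + ((c + (X ω - μ0)) / (2 * c)) • (l * μ0 + l * c) = l * X ω := by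
        simp only [smul_eq_mul]; field_simp; ring
      rw [harg] at hcv
      refine hcv.trans (le_of_eq ?_)
      simp only [smul_eq_mul, ← hA, ← hB]
      field_simp
      ring
    have hint_rhs : Integrable (fun ω => ((c + μ0) * A + (c - μ0) * B) / (2 * c)
        + ((B - A) / (2 * c)) * X ω) ℙ := (integrable_const _).add (hintX.const_mul _)
    have hmgf_le : mgf X ℙ l ≤ (A + B) / 2 := by
      have hint_exp : Integrable (fun ω => Real.exp (l * X ω)) ℙ := by
        refine Integrable.mono' (integrable_const (Real.exp (l * c)))
          ((hm.const_mul l).exp).aestronglyMeasurable ?_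
        filter_upwards [hc] with ω h2
        rw [Real.norm_eq_abs, abs_of_pos (Real.exp_pos _)]
        exact Real.exp_le_exp.2 (mul_le_mul_of_nonneg_left h2 hl)
      calc mgf X ℙ l ≤ ∫ ω, (((c + μ0) * A + (c - μ0) * B) / (2 * c)
            + ((B - A) / (2 * c)) * X ω) ∂ℙ := integral_mono_ae hint_exp hint_rhs key
        _ = ((c + μ0) * A + (c - μ0) * B) / (2 * c) + ((B - A) / (2 * c)) * μ0 := by
            rw [integral_add (integrable_const _) (hintX.const_mul _), integral_const,
              integral_const_mul]
            simp [hμ0def]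
        _ = (A + B) / 2 := by field_simp; ring
    have hcosh : (A + B) / 2 = Real.exp (l * μ0) * Real.cosh (l * c) := by
      rw [Real.cosh_eq, hA, hB, show l * μ0 - l * c = l * μ0 + -(l * c) by ring,
        Real.exp_add, Real.exp_add]
      ring
    calc mgf X ℙ l ≤ Real.exp (l * μ0) * Real.cosh (l * c) := by rw [← hcosh]; exact hmgf_le
      _ ≤ Real.exp (l * μ0) * Real.exp ((l * c) ^ 2 / 2) := by
          exact mul_le_mul_of_nonneg_left (Real.cosh_le_exp_half_sq _) (Real.exp_pos _).le
      _ ≤ Real.exp (l * mm + l ^ 2 * c ^ 2 / 2) := by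
          rw [← Real.exp_add]
          apply Real.exp_le_exp.2
          have : l * μ0 ≤ l * mm := mul_le_mul_of_nonneg_left (hmean) hl
          nlinarith

/-- Self-normalized bound for sums of independent nonnegative bounded random
variables: with `S = Σᵢ Wᵢ`, `a = 2 Σᵢ mᵢ`, `b = (Σᵢ cᵢ²)^{1/2}`,
`V² = Σᵢ Wᵢ²`, if `P(S ≥ a) ≤ 1/4` then
`P(S ≥ x(a + b + V)) ≤ 2 e^{-x²/2}` for all `x > 0`. -/
theorem self_normalized_nonneg_bound
    {Ω : Type*} [MeasureSpace Ω] [IsProbabilityMeasure (ℙ : Measure Ω)]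
    {n : ℕ} (W : Fin n → Ω → ℝ) (hmeas : ∀ i, Measurable (W i))
    (hindep : iIndepFun W ℙ)
    (c m : Fin n → ℝ)
    (hnonneg : ∀ i, ∀ᵐ ω ∂ℙ, 0 ≤ W i ω)
    (hbdd : ∀ i, ∀ᵐ ω ∂ℙ, W i ω ≤ c i)
    (hmean : ∀ i, (∫ ω, W i ω) ≤ m i)
    (a b : ℝ)
    (ha : a = 2 * ∑ i, m i)
    (hb : b = Real.sqrt (∑ i, (c i) ^ 2))
    (hS : ℙ {ω | a ≤ ∑ i, W i ω} ≤ ENNReal.ofReal (1 / 4)) :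
    ∀ x : ℝ, 0 < x →
      ℙ {ω | x * (a + b + Real.sqrt (∑ i, (W i ω) ^ 2)) ≤ ∑ i, W i ω}
        ≤ ENNReal.ofReal (2 * Real.exp (-x ^ 2 / 2)) := by
  intro x hx
  have ha0 : 0 ≤ a := by
    rw [ha]
    have : ∀ i ∈ Finset.univ, (0:ℝ) ≤ m i := fun i _ =>
      (integral_nonneg_of_ae (hnonneg i)).trans (hmean i)
    have := Finset.sum_nonneg this
    linarith
  rcases le_or_gt (x ^ 2 / 2) (Real.log 2) with hx2 | hx2
  · -- trivial regime: 2 e^{-x²/2} ≥ 1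
    have h2 : Real.exp (x ^ 2 / 2) ≤ 2 := by
      calc Real.exp (x ^ 2 / 2) ≤ Real.exp (Real.log 2) := Real.exp_le_exp.2 hx2
        _ = 2 := Real.exp_log (by norm_num)
    have hmul : Real.exp (-x ^ 2 / 2) * Real.exp (x ^ 2 / 2) = 1 := by
      rw [← Real.exp_add, show -x ^ 2 / 2 + x ^ 2 / 2 = 0 by ring, Real.exp_zero]
    have h1 : (1:ℝ) ≤ 2 * Real.exp (-x ^ 2 / 2) := by
      nlinarith [Real.exp_pos (-x ^ 2 / 2)]
    calc ℙ _ ≤ 1 := prob_le_one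
      _ = ENNReal.ofReal 1 := by simp
      _ ≤ ENNReal.ofReal (2 * Real.exp (-x ^ 2 / 2)) := ENNReal.ofReal_le_ofReal h1
  · have hlog2 : (0.6931471803:ℝ) < Real.log 2 := Real.log_two_gt_d9
    have hx1 : 1 ≤ x := by nlinarith
    have hbnn : 0 ≤ b := hb ▸ Real.sqrt_nonneg _
    have hsumc : (0:ℝ) ≤ ∑ i, (c i) ^ 2 := Finset.sum_nonneg fun i _ => sq_nonneg _
    have hb2 : b ^ 2 = ∑ i, (c i) ^ 2 := by rw [hb, Real.sq_sqrt hsumc]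
    rcases eq_or_lt_of_le hbnn with hb0 | hb0
    · -- b = 0 : all c i = 0, all W i = 0 a.e.
      have hc0 : ∀ i, c i = 0 := by
        intro i
        have hsum0 : ∑ i, (c i) ^ 2 = 0 := by rw [← hb2, ← hb0]; norm_num
        have := (Finset.sum_eq_zero_iff_of_nonneg (fun i _ => sq_nonneg (c i))).1 hsum0
          i (Finset.mem_univ i)
        exact pow_eq_zero_iff (by norm_num) |>.1 this
      have hW0 : ∀ᵐ ω ∂ℙ, ∀ i, W i ω = 0 := by
        rw [MeasureTheory.ae_all_iff]
        intro i
        filter_upwards [hnonneg i, hbdd i] with ω h1 h2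
        exact le_antisymm (by rw [← hc0 i]; exact h2) h1
      rcases eq_or_lt_of_le ha0 with ha0' | ha0'
      · -- a = 0 : contradicts hS
        exfalso
        have hfull : ∀ᵐ ω ∂ℙ, a ≤ ∑ i, W i ω := by
          filter_upwards [hW0] with ω h
          rw [← ha0']
          simp [h]
        have hms : MeasurableSet {ω | a ≤ ∑ i, W i ω} :=
          measurableSet_le measurable_const (Finset.measurable_sum _ fun i _ => hmeas i)
        have hcompl : ℙ {ω | a ≤ ∑ i, W i ω}ᶜ = 0 := by
          have := MeasureTheory.ae_iff.mp hfull
          simpa [Set.compl_setOf] using this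
        have h1 : (1:ENNReal) = ℙ {ω | a ≤ ∑ i, W i ω} + ℙ {ω | a ≤ ∑ i, W i ω}ᶜ := by
          rw [measure_add_measure_compl hms]
          exact measure_univ.symm
        rw [hcompl, add_zero] at h1
        have : (1:ENNReal) ≤ ENNReal.ofReal (1/4) := h1 ▸ hS
        have hlt : ENNReal.ofReal (1/4) < 1 := ENNReal.ofReal_lt_one.2 (by norm_num)
        exact absurd this (not_le.2 hlt)
      · -- a > 0 : event is a.e. empty
        have hsub : {ω | x * (a + b + Real.sqrt (∑ i, (W i ω) ^ 2)) ≤ ∑ i, W i ω}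
            ⊆ {ω | ¬ ∀ i, W i ω = 0} := by
          intro ω hω
          simp only [Set.mem_setOf_eq] at hω ⊢
          intro hall
          have hsum : ∑ i, W i ω = 0 := Finset.sum_eq_zero fun i _ => hall i
          have hsq : ∑ i, (W i ω) ^ 2 = 0 := Finset.sum_eq_zero fun i _ => by
            rw [hall i]; ring
          rw [hsum, hsq, Real.sqrt_zero, ← hb0] at hω
          nlinarith
        have hz : ℙ {ω | ¬ ∀ i, W i ω = 0} = 0 := by
          rw [← MeasureTheory.ae_iff]; exact hW0
        calc ℙ _ ≤ ℙ {ω | ¬ ∀ i, W i ω = 0} := measure_mono hsub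
          _ = 0 := hz
          _ ≤ _ := zero_le
    · -- main case : b > 0, x ≥ 1
      set l : ℝ := x / b with hl
      have hl0 : 0 ≤ l := le_of_lt (div_pos hx hb0)
      -- mgf bound for the sum
      have hmgf : mgf (∑ i, W i) ℙ l ≤ Real.exp (l * (a / 2) + l ^ 2 * b ^ 2 / 2) := by
        rw [hindep.mgf_sum hmeas]
        calc ∏ i, mgf (W i) ℙ l
            ≤ ∏ i, Real.exp (l * m i + l ^ 2 * (c i) ^ 2 / 2) := by
              refine Finset.prod_le_prod (fun i _ => mgf_nonneg) (fun i _ => ?_)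
              exact aux_mgf_bound (W i) (hmeas i) (c i) (m i) l hl0 (hnonneg i) (hbdd i) (hmean i)
          _ = Real.exp (∑ i, (l * m i + l ^ 2 * (c i) ^ 2 / 2)) := (Real.exp_sum _ _).symm
          _ = Real.exp (l * (a / 2) + l ^ 2 * b ^ 2 / 2) := by
              rw [Finset.sum_add_distrib, ← Finset.mul_sum, ← Finset.sum_div, ← Finset.mul_sum,
                ha, hb2]
              ring_nf
      -- integrability of exp(l * S)
      have hintS : Integrable (fun ω => Real.exp (l * (∑ i, W i) ω)) ℙ := by
        have heq : (fun ω => Real.exp (l * (∑ i, W i) ω))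
            = fun ω => Real.exp (l * ∑ i, W i ω) := by
          funext ω; rw [Finset.sum_apply]
        rw [heq]
        refine Integrable.mono' (integrable_const (Real.exp (l * ∑ i, c i)))
          (((Finset.measurable_sum Finset.univ fun i _ => hmeas i).const_mul l).exp
            |>.aestronglyMeasurable) ?_
        · filter_upwards [MeasureTheory.ae_all_iff.2 hbdd] with ω hω
          rw [Real.norm_eq_abs, abs_of_pos (Real.exp_pos _)]
          refine Real.exp_le_exp.2 (mul_le_mul_of_nonneg_left ?_ hl0)
          exact Finset.sum_le_sum fun i _ => hω i
      have hchern := measure_ge_le_exp_mul_mgf (μ := ℙ) (X := ∑ i, W i)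
        (x * (a + b)) hl0 hintS
      have hsetEq : {ω | x * (a + b) ≤ (∑ i, W i) ω} = {ω | x * (a + b) ≤ ∑ i, W i ω} := by
        ext ω; rw [Set.mem_setOf_eq, Set.mem_setOf_eq, Finset.sum_apply]
      rw [hsetEq] at hchern
      -- real-valued bound
      have hreal : (ℙ {ω | x * (a + b) ≤ ∑ i, W i ω}).toReal ≤ 2 * Real.exp (-x ^ 2 / 2) := by
        refine hchern.trans ?_
        calc Real.exp (-l * (x * (a + b))) * mgf (∑ i, W i) ℙ l
            ≤ Real.exp (-l * (x * (a + b))) * Real.exp (l * (a / 2) + l ^ 2 * b ^ 2 / 2) := by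
              exact mul_le_mul_of_nonneg_left hmgf (Real.exp_pos _).le
          _ = Real.exp (-l * (x * (a + b)) + (l * (a / 2) + l ^ 2 * b ^ 2 / 2)) :=
              (Real.exp_add _ _).symm
          _ ≤ Real.exp (-x ^ 2 / 2) := by
              apply Real.exp_le_exp.2
              rw [hl]
              have hbne : b ≠ 0 := ne_of_gt hb0
              have hd : (0:ℝ) ≤ x * a * (x - 1/2) / b := by
                apply div_nonneg _ hb0.le
                apply mul_nonneg (mul_nonneg hx.le ha0)
                linarith
              have heq : -(x / b) * (x * (a + b)) + (x / b * (a / 2) + (x / b) ^ 2 * b ^ 2 / 2)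
                  = -x ^ 2 / 2 - x * a * (x - 1/2) / b := by
                field_simp
                ring
              rw [heq]
              linarith
          _ ≤ 2 * Real.exp (-x ^ 2 / 2) := by nlinarith [Real.exp_pos (-x ^ 2 / 2)]
      -- event inclusion and conclusion
      have hsub : {ω | x * (a + b + Real.sqrt (∑ i, (W i ω) ^ 2)) ≤ ∑ i, W i ω}
          ⊆ {ω | x * (a + b) ≤ ∑ i, W i ω} := by
        intro ω hω
        simp only [Set.mem_setOf_eq] at hω ⊢
        have hsq : 0 ≤ Real.sqrt (∑ i, (W i ω) ^ 2) := Real.sqrt_nonneg _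
        nlinarith
      calc ℙ _ ≤ ℙ {ω | x * (a + b) ≤ ∑ i, W i ω} := measure_mono hsub
        _ = ENNReal.ofReal ((ℙ {ω | x * (a + b) ≤ ∑ i, W i ω}).toReal) :=
            (ENNReal.ofReal_toReal (measure_ne_top _ _)).symm
        _ ≤ ENNReal.ofReal (2 * Real.exp (-x ^ 2 / 2)) := ENNReal.ofReal_le_ofReal hreal
end
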